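/- Let p ≥ 0 and let Γ be a connected stable ribbon graph that is a p-tree, i.e. b₁(Γ) = 0 and there is a vertex v₀ with l(v₀) = p while l(v) = 0 for every other vertex v. Then |L(Γ)| ≥ |v₀| + |V(Γ)| − 1. In particular the valency |v₀| of v₀ is at most the number of legs |L(Γ)|, with equality if and only if Γ is a corolla (i.e. |V(Γ)| = 1 and E(Γ) = ∅). -/
import Mathlib


noncomputable section

/-- The set of orbits ("cycles", counting fixed points, i.e. `1`-cycles)
of a permutation `σ` of `α`: each orbit is recorded as the set of points
in the same cycle of `σ` as some given point. -/
def permOrbits {α : Type*} (σ : Equiv.Perm α) : Set (Set α) :=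
  Set.range fun a => {x | σ.SameCycle a x}

/-- The data of a stable ribbon graph (the stability and connectedness conditions
are stated separately as `RibbonGraph.IsStable` and `RibbonGraph.Connected`):
a finite set `H` of half-edges, a finite set `V` of vertices, an incidence map
`ρ : H → V`, an involution `κ` of `H` (whose fixed points are the legs and whose
`2`-element orbits are the edges), a permutation `c` of `H` preserving each fiber
of `ρ` (whose orbits inside `ρ⁻¹(v)` form the cyclic decomposition `C(v)` of the
vertex `v`), and genus and boundary functions `g, b : V → ℕ`. -/
structure RibbonGraph where
  /-- the half-edges -/
  H : Type
  /-- the vertices -/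
  V : Type
  fintH : Fintype H
  fintV : Fintype V
  /-- the incidence map -/
  ρ : H → V
  /-- the involution determining the legs and the edges -/
  κ : Equiv.Perm H
  κ_invol : ∀ h, κ (κ h) = h
  /-- the permutation determining the cyclic decomposition of each vertex -/
  c : Equiv.Perm H
  c_fiber : ∀ h, ρ (c h) = ρ h
  /-- the genus of each vertex -/
  g : V → ℕ
  /-- the boundary of each vertex -/
  b : V → ℕ

attribute [instance] RibbonGraph.fintH RibbonGraph.fintV

namespace RibbonGraph

variable (Γ : RibbonGraph)

/-- The set `L(Γ)` of legs: the fixed points of the involution `κ`. -/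
def legSet : Set Γ.H := {h | Γ.κ h = h}

/-- `|L(Γ)|`, the number of legs. -/
def numLegs : ℕ := Γ.legSet.ncard

/-- The set `E(Γ)` of edges: the `2`-element orbits of the involution `κ`. -/
def edgeSet : Set (Set Γ.H) := {S | ∃ h, Γ.κ h ≠ h ∧ S = {h, Γ.κ h}}

/-- `|E(Γ)|`, the number of edges. -/
def numEdges : ℕ := Γ.edgeSet.ncard

/-- `|v|`, the valency of a vertex: the number of incident half-edges. -/
def valency (v : Γ.V) : ℕ := {h | Γ.ρ h = v}.ncard

/-- `|C(v)|`, the number of cycles in the cyclic decomposition of the vertex `v`: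
the number of orbits of `c` contained in the fiber `ρ⁻¹(v)`. -/
def numCyclesAt (v : Γ.V) : ℕ := {S ∈ permOrbits Γ.c | ∃ h ∈ S, Γ.ρ h = v}.ncard

/-- `|C(Γ)|`, the total number of orbits of the permutation `c`. -/
def numCycles : ℕ := (permOrbits Γ.c).ncard

/-- `β_Γ#`, the number of orbits (cycles, counting fixed points) of the composite
permutation `c ∘ κ`. -/
def betaSharp : ℕ := (permOrbits (Γ.c * Γ.κ)).ncard

/-- The loop number `l(v) = 2 g(v) + b(v) + |C(v)| − 1` of a vertex. -/
def vertexLoop (v : Γ.V) : ℚ := 2 * Γ.g v + Γ.b v + Γ.numCyclesAt v - 1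

/-- Stability: `|C(v)| + b(v) > 0` and `2 l(v) + |v| ≥ 3` for every vertex. -/
def IsStable : Prop :=
  ∀ v : Γ.V, 0 < Γ.numCyclesAt v + Γ.b v ∧ 3 ≤ 2 * Γ.vertexLoop v + Γ.valency v

/-- The relation on vertices relating `ρ(h)` to `ρ(κ(h))` for each half-edge `h`. -/
def adjRel : Γ.V → Γ.V → Prop := fun v w => ∃ h, Γ.ρ h = v ∧ Γ.ρ (Γ.κ h) = w

/-- Connectedness: the vertex set is nonempty and the equivalence relation generated
by `adjRel` relates any two vertices. -/
def Connected : Prop :=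
  Nonempty Γ.V ∧ ∀ v w : Γ.V, Relation.EqvGen Γ.adjRel v w

/-- The first Betti number `b₁(Γ) = |E(Γ)| − |V(Γ)| + 1` of a connected graph. -/
def betti : ℚ := (Γ.numEdges : ℚ) - Fintype.card Γ.V + 1

/-- The genus `g(Γ) = 1 − |V(Γ)| + (|E(Γ)| + |C(Γ)| − β_Γ#)/2 + Σ_v g(v)` of a
connected stable ribbon graph. -/
def genus : ℚ :=
  1 - (Fintype.card Γ.V : ℚ) + ((Γ.numEdges : ℚ) + Γ.numCycles - Γ.betaSharp) / 2
    + ∑ v, (Γ.g v : ℚ)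

/-- The number of boundary components `B(Γ) = β_Γ# + Σ_v b(v)`. -/
def numBoundary : ℚ := (Γ.betaSharp : ℚ) + ∑ v, (Γ.b v : ℚ)

/-- The loop number `ℓ(Γ) = 2 g(Γ) + B(Γ) − 1`. -/
def loopNumber : ℚ := 2 * Γ.genus + Γ.numBoundary - 1

open Classical in
/-- The half-edges are partitioned into legs and two halves per edge. -/
lemma card_H_eq (Γ : RibbonGraph) :
    Fintype.card Γ.H = Γ.numLegs + 2 * Γ.numEdges := by
  classical
  set S : Finset Γ.H := Finset.univ.filter (fun h => Γ.κ h ≠ h) with hS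
  have hLegs : Γ.numLegs = (Finset.univ.filter (fun h => Γ.κ h = h)).card := by
    rw [numLegs, legSet, Set.ncard_eq_toFinset_card']
    congr 1
    ext h; simp
  set f : Γ.H → Set Γ.H := fun h => {h, Γ.κ h} with hf
  set T : Finset (Set Γ.H) := S.image f with hT
  have hedge : Γ.edgeSet = ↑T := by
    ext e
    simp only [edgeSet, Set.mem_setOf_eq, hT, Finset.coe_image, Set.mem_image,
      Finset.mem_coe, hS, Finset.mem_filter, Finset.mem_univ, true_and, hf]
    constructor
    · rintro ⟨h, hne, rfl⟩; exact ⟨h, hne, rfl⟩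
    · rintro ⟨h, hne, rfl⟩; exact ⟨h, hne, rfl⟩
  have hE : Γ.numEdges = T.card := by
    rw [numEdges, hedge, Set.ncard_coe_finset]
  have hfib : ∀ e ∈ T, (S.filter (fun h => f h = e)).card = 2 := by
    intro e he
    obtain ⟨h₀, h₀S, rfl⟩ := Finset.mem_image.mp he
    have h₀ne : Γ.κ h₀ ≠ h₀ := by
      have := (Finset.mem_filter.mp h₀S).2; exact this
    have hne' : h₀ ≠ Γ.κ h₀ := fun hx => h₀ne hx.symm
    have hfil : S.filter (fun h => f h = f h₀) = {h₀, Γ.κ h₀} := by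
      ext h
      simp only [Finset.mem_filter, hS, Finset.mem_univ, true_and,
        Finset.mem_insert, Finset.mem_singleton]
      constructor
      · rintro ⟨hne, heq⟩
        have hmem : h ∈ f h₀ := heq ▸ (Set.mem_insert h _)
        simpa [hf] using hmem
      · rintro (rfl | rfl)
        · exact ⟨h₀ne, rfl⟩
        · refine ⟨?_, ?_⟩
          · rw [Γ.κ_invol]; exact hne'
          · simp only [hf, Γ.κ_invol]
            exact Set.pair_comm _ _
    rw [hfil, Finset.card_insert_of_notMem (by simpa using hne'),
      Finset.card_singleton]
  have hScard : S.card = 2 * T.card := by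
    rw [Finset.card_eq_sum_card_fiberwise
      (fun h hh => Finset.mem_image_of_mem f hh),
      Finset.sum_congr rfl hfib, Finset.sum_const, smul_eq_mul, mul_comm]
  have hsplit : (Finset.univ.filter (fun h => Γ.κ h = h)).card + S.card
      = Fintype.card Γ.H := by
    rw [← Finset.card_univ, hS]
    exact Finset.card_filter_add_card_filter_not _
  omega

open Classical in
lemma sum_valency_eq (Γ : RibbonGraph) :
    ∑ v, Γ.valency v = Fintype.card Γ.H := by
  classical
  have hval : ∀ v : Γ.V, Γ.valency v
      = (Finset.univ.filter (fun h => Γ.ρ h = v)).card := by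
    intro v
    rw [valency, Set.ncard_eq_toFinset_card']
    congr 1
    ext h; simp
  rw [Finset.sum_congr rfl (fun v _ => hval v), ← Finset.card_univ]
  exact (Finset.card_eq_sum_card_fiberwise (fun h _ => Finset.mem_univ (Γ.ρ h))).symm

end RibbonGraph

/-- **Legs of a `p`-tree.**
Let `p ≥ 0` and let `Γ` be a connected stable ribbon graph that is a `p`-tree, i.e.
`b₁(Γ) = 0` and there is a vertex `v₀` with `l(v₀) = p` while `l(v) = 0` for every
other vertex `v`.  Then `|L(Γ)| ≥ |v₀| + |V(Γ)| − 1`.  In particular the valency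
`|v₀|` of `v₀` is at most the number of legs `|L(Γ)|`, with equality if and only if
`Γ` is a corolla (i.e. `|V(Γ)| = 1` and `E(Γ) = ∅`). -/
theorem RibbonGraph.ptree_numLegs
    (Γ : RibbonGraph) (hstable : Γ.IsStable) (hconn : Γ.Connected)
    (p : ℕ) (v₀ : Γ.V)
    (hbetti : Γ.betti = 0)
    (hv₀ : Γ.vertexLoop v₀ = (p : ℚ))
    (hother : ∀ v : Γ.V, v ≠ v₀ → Γ.vertexLoop v = 0) :
    (Γ.valency v₀ : ℚ) + (Fintype.card Γ.V : ℚ) - 1 ≤ (Γ.numLegs : ℚ) ∧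
    Γ.valency v₀ ≤ Γ.numLegs ∧
    (Γ.valency v₀ = Γ.numLegs ↔ Fintype.card Γ.V = 1 ∧ Γ.edgeSet = ∅) := by
  classical
  have hcardV : 1 ≤ Fintype.card Γ.V := @Fintype.card_pos _ _ ⟨v₀⟩
  have hcardVq : (1 : ℚ) ≤ (Fintype.card Γ.V : ℚ) := by exact_mod_cast hcardV
  have hH := Γ.card_H_eq
  have hHq : (Fintype.card Γ.H : ℚ) = Γ.numLegs + 2 * Γ.numEdges := by
    exact_mod_cast hH
  have hsumq : (Fintype.card Γ.H : ℚ) = ∑ v, (Γ.valency v : ℚ) := by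
    rw [← Nat.cast_sum]
    exact_mod_cast (Γ.sum_valency_eq).symm
  have hEq : (Γ.numEdges : ℚ) = (Fintype.card Γ.V : ℚ) - 1 := by
    have hb := hbetti
    rw [RibbonGraph.betti] at hb
    linarith
  have hval3 : ∀ v ∈ Finset.univ.erase v₀, (3 : ℚ) ≤ (Γ.valency v : ℚ) := by
    intro v hv
    have hne := (Finset.mem_erase.mp hv).1
    have h2 := (hstable v).2
    rw [hother v hne] at h2
    linarith
  have hsplit : ∑ v, (Γ.valency v : ℚ)
      = (Γ.valency v₀ : ℚ) + ∑ v ∈ Finset.univ.erase v₀, (Γ.valency v : ℚ) :=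
    (Finset.add_sum_erase _ _ (Finset.mem_univ v₀)).symm
  have hbound : (3 : ℚ) * ((Fintype.card Γ.V : ℚ) - 1)
      ≤ ∑ v ∈ Finset.univ.erase v₀, (Γ.valency v : ℚ) := by
    have h1 := Finset.sum_le_sum hval3
    rw [Finset.sum_const, nsmul_eq_mul] at h1
    have hcard : ((Finset.univ.erase v₀).card : ℚ) = (Fintype.card Γ.V : ℚ) - 1 := by
      rw [Finset.card_erase_of_mem (Finset.mem_univ _), Finset.card_univ,
        Nat.cast_sub hcardV, Nat.cast_one]
    rw [hcard] at h1
    linarith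
  have main : (Γ.valency v₀ : ℚ) + (Fintype.card Γ.V : ℚ) - 1 ≤ (Γ.numLegs : ℚ) := by
    linarith
  refine ⟨main, ?_, ?_⟩
  · have : (Γ.valency v₀ : ℚ) ≤ (Γ.numLegs : ℚ) := by linarith
    exact_mod_cast this
  · constructor
    · intro heq
      have heqq : (Γ.valency v₀ : ℚ) = (Γ.numLegs : ℚ) := by exact_mod_cast heq
      have hV1q : (Fintype.card Γ.V : ℚ) ≤ 1 := by linarith
      have hV1 : Fintype.card Γ.V = 1 :=
        le_antisymm (by exact_mod_cast hV1q) hcardV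
      refine ⟨hV1, ?_⟩
      have hE0 : Γ.numEdges = 0 := by
        have : (Γ.numEdges : ℚ) = 0 := by rw [hEq, hV1]; norm_num
        exact_mod_cast this
      exact (Set.ncard_eq_zero (Set.toFinite _)).mp hE0
    · rintro ⟨hV1, hEmpty⟩
      have hE0 : Γ.numEdges = 0 := by
        rw [RibbonGraph.numEdges, hEmpty, Set.ncard_empty]
      have huniv : (Finset.univ : Finset Γ.V) = {v₀} := by
        have hcard1 : (Finset.univ : Finset Γ.V).card = 1 := by
          rw [Finset.card_univ]; exact hV1
        obtain ⟨a, ha⟩ := Finset.card_eq_one.mp hcard1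
        have : v₀ ∈ ({a} : Finset Γ.V) := ha ▸ Finset.mem_univ v₀
        rw [Finset.mem_singleton] at this
        rw [ha, this]
      have hsum1 : ∑ v, Γ.valency v = Γ.valency v₀ := by
        rw [huniv, Finset.sum_singleton]
      have := Γ.sum_valency_eq
      rw [hsum1] at this
      omega
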